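/- For a bilinear form p(x,y) = x^T A y with A ∈ ℝ^{n×n}, viewed as a quadratic form in 2n variables, the completely bounded norm of p equals the completely bounded norm of the matrix A: ‖p‖_cb = ‖A‖_cb. -/

import Mathlib

noncomputable section

/-- `d × d` real matrices, viewed as operators on Euclidean space (with operator norm). -/
abbrev Mat (d : ℕ) := EuclideanSpace ℝ (Fin d) →L[ℝ] EuclideanSpace ℝ (Fin d)

/-- The completely bounded norm of a matrix `M` indexed by a finite type:
`sup ‖∑_{i,j} M_{i,j} A(i) B(j)‖` over contraction-valued maps `A, B`. -/
def matCb {ι : Type} [Fintype ι] (M : Matrix ι ι ℝ) : ℝ :=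
  sSup {c : ℝ | ∃ (d : ℕ) (A B : ι → Mat d),
    (∀ i, ‖A i‖ ≤ 1) ∧ (∀ j, ‖B j‖ ≤ 1) ∧
    c = ‖∑ i : ι, ∑ j : ι, M i j • (A i * B j)‖}

open RealInnerProductSpace

namespace CbAux

/-- The defining set of `matCb`. -/
def cbSet {ι : Type} [Fintype ι] (M : Matrix ι ι ℝ) : Set ℝ :=
  {c : ℝ | ∃ (d : ℕ) (A B : ι → Mat d),
    (∀ i, ‖A i‖ ≤ 1) ∧ (∀ j, ‖B j‖ ≤ 1) ∧
    c = ‖∑ i : ι, ∑ j : ι, M i j • (A i * B j)‖}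

lemma matCb_eq {ι : Type} [Fintype ι] (M : Matrix ι ι ℝ) : matCb M = sSup (cbSet M) := rfl

lemma cbSet_bddAbove {ι : Type} [Fintype ι] (M : Matrix ι ι ℝ) : BddAbove (cbSet M) := by
  refine ⟨∑ i : ι, ∑ j : ι, |M i j|, ?_⟩
  rintro c ⟨d, B, C, hB, hC, rfl⟩
  calc ‖∑ i : ι, ∑ j : ι, M i j • (B i * C j)‖
      ≤ ∑ i : ι, ‖∑ j : ι, M i j • (B i * C j)‖ := norm_sum_le _ _
    _ ≤ ∑ i : ι, ∑ j : ι, |M i j| := by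
        refine Finset.sum_le_sum fun i _ => ?_
        calc ‖∑ j : ι, M i j • (B i * C j)‖ ≤ ∑ j : ι, ‖M i j • (B i * C j)‖ := norm_sum_le _ _
          _ ≤ ∑ j : ι, |M i j| := by
              refine Finset.sum_le_sum fun j _ => ?_
              rw [norm_smul (M i j) (B i * C j), Real.norm_eq_abs]
              calc |M i j| * ‖B i * C j‖ ≤ |M i j| * (‖B i‖ * ‖C j‖) := by
                    exact mul_le_mul_of_nonneg_left (norm_mul_le _ _) (abs_nonneg _)
                _ ≤ |M i j| * 1 := by
                    refine mul_le_mul_of_nonneg_left ?_ (abs_nonneg _)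
                    exact mul_le_one₀ (hB i) (norm_nonneg _) (hC j)
                _ = |M i j| := mul_one _

lemma zero_mem_cbSet {ι : Type} [Fintype ι] (M : Matrix ι ι ℝ) : (0 : ℝ) ∈ cbSet M :=
  ⟨1, fun _ => 0, fun _ => 0, fun _ => by simp, fun _ => by simp, by simp⟩

lemma matCb_nonneg {ι : Type} [Fintype ι] (M : Matrix ι ι ℝ) : 0 ≤ matCb M :=
  le_csSup (cbSet_bddAbove M) (zero_mem_cbSet M)

lemma le_matCb {ι : Type} [Fintype ι] (M : Matrix ι ι ℝ) {c : ℝ} (hc : c ∈ cbSet M) :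
    c ≤ matCb M := le_csSup (cbSet_bddAbove M) hc

/-- Rank-one operator `x ↦ ⟪v, x⟫ • u`. -/
def outer {d : ℕ} (u v : EuclideanSpace ℝ (Fin d)) : Mat d :=
  (innerSL ℝ v).smulRight u

lemma outer_apply {d : ℕ} (u v x : EuclideanSpace ℝ (Fin d)) :
    outer u v x = ⟪v, x⟫ • u := rfl

lemma outer_norm {d : ℕ} (u v : EuclideanSpace ℝ (Fin d)) : ‖outer u v‖ = ‖v‖ * ‖u‖ := by
  rw [outer, ContinuousLinearMap.norm_smulRight_apply, innerSL_apply_norm]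

lemma outer_mul_outer {d : ℕ} (u v u' v' : EuclideanSpace ℝ (Fin d)) :
    outer u v * outer u' v' = ⟪v, u'⟫ • outer u v' := by
  ext x t
  simp only [ContinuousLinearMap.mul_apply, outer_apply, ContinuousLinearMap.smul_apply,
    inner_smul_right, real_inner_smul_right, PiLp.smul_apply, smul_eq_mul,
    RCLike.inner_apply, conj_trivial, PiLp.inner_apply]
  ring

/-- Key construction : any "vector value" of the bilinear form of `A` is attained by
contraction tuples for any matrix `T` representing the quadratic form. -/
lemma key {n : ℕ} (A : Matrix (Fin n) (Fin n) ℝ)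
    (T : Matrix (Fin n ⊕ Fin n) (Fin n ⊕ Fin n) ℝ)
    (hT : ∀ z : Fin n ⊕ Fin n → ℝ,
          ∑ k, ∑ l, T k l * z k * z l =
          ∑ i : Fin n, ∑ j : Fin n, A i j * z (Sum.inl i) * z (Sum.inr j))
    (d : ℕ) (u v : Fin n → EuclideanSpace ℝ (Fin d))
    (hu : ∀ i, ‖u i‖ ≤ 1) (hv : ∀ j, ‖v j‖ ≤ 1) :
    |∑ i : Fin n, ∑ j : Fin n, A i j * ⟪u i, v j⟫| ∈ cbSet T := by
  classical
  match d with
  | 0 =>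
    have hz : ∀ i j, ⟪u i, v j⟫ = (0:ℝ) := by
      intro i j
      have : u i = 0 := Subsingleton.elim _ _
      rw [this, inner_zero_left]
    simp only [hz, mul_zero, Finset.sum_const_zero, abs_zero]
    exact zero_mem_cbSet T
  | (m + 1) =>
    set e₀ : EuclideanSpace ℝ (Fin (m + 1)) := EuclideanSpace.single 0 1 with he₀
    have he₀n : ‖e₀‖ = 1 := by rw [he₀, EuclideanSpace.norm_single, norm_one]
    set w : Fin n ⊕ Fin n → EuclideanSpace ℝ (Fin (m + 1)) := Sum.elim u v with hw
    have hwn : ∀ k, ‖w k‖ ≤ 1 := by rintro (i | j) <;> [exact hu i; exact hv j]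
    set X : Fin n ⊕ Fin n → Mat (m + 1) := fun k => outer e₀ (w k) with hX
    set Y : Fin n ⊕ Fin n → Mat (m + 1) := fun l => outer (w l) e₀ with hY
    have hXn : ∀ k, ‖X k‖ ≤ 1 := fun k => by
      rw [hX]; rw [outer_norm, he₀n, mul_one]; exact hwn k
    have hYn : ∀ l, ‖Y l‖ ≤ 1 := fun l => by
      rw [hY]; rw [outer_norm, he₀n, one_mul]; exact hwn l
    -- scalar identity
    have hscal : ∑ k, ∑ l, T k l * ⟪w k, w l⟫ =
        ∑ i : Fin n, ∑ j : Fin n, A i j * ⟪u i, v j⟫ := by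
      have expand : ∀ (k l : Fin n ⊕ Fin n),
          T k l * ⟪w k, w l⟫ = ∑ t : Fin (m+1), T k l * w k t * w l t := by
        intro k l
        simp only [PiLp.inner_apply, RCLike.inner_apply, conj_trivial, Finset.mul_sum, mul_assoc]
        exact Finset.sum_congr rfl fun t _ => by ring
      have expand2 : ∀ (i j : Fin n),
          A i j * ⟪u i, v j⟫ = ∑ t : Fin (m+1), A i j * u i t * v j t := by
        intro i j
        simp only [PiLp.inner_apply, RCLike.inner_apply, conj_trivial, Finset.mul_sum, mul_assoc]
        exact Finset.sum_congr rfl fun t _ => by ring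
      calc ∑ k, ∑ l, T k l * ⟪w k, w l⟫
          = ∑ k, ∑ l, ∑ t : Fin (m+1), T k l * w k t * w l t := by
            exact Finset.sum_congr rfl fun k _ => Finset.sum_congr rfl fun l _ => expand k l
        _ = ∑ k, ∑ t : Fin (m+1), ∑ l, T k l * w k t * w l t :=
            Finset.sum_congr rfl fun k _ => Finset.sum_comm
        _ = ∑ t : Fin (m+1), ∑ k, ∑ l, T k l * w k t * w l t := Finset.sum_comm
        _ = ∑ t : Fin (m+1), ∑ i : Fin n, ∑ j : Fin n, A i j * u i t * v j t := by
            exact Finset.sum_congr rfl fun t _ => hT fun k => w k t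
        _ = ∑ i : Fin n, ∑ t : Fin (m+1), ∑ j : Fin n, A i j * u i t * v j t :=
            Finset.sum_comm
        _ = ∑ i : Fin n, ∑ j : Fin n, ∑ t : Fin (m+1), A i j * u i t * v j t :=
            Finset.sum_congr rfl fun i _ => Finset.sum_comm
        _ = ∑ i : Fin n, ∑ j : Fin n, A i j * ⟪u i, v j⟫ := by
            exact Finset.sum_congr rfl fun i _ => Finset.sum_congr rfl fun j _ =>
              (expand2 i j).symm
    -- operator identity
    have hop : ∑ k, ∑ l, T k l • (X k * Y l) =
        (∑ k, ∑ l, T k l * ⟪w k, w l⟫) • outer e₀ e₀ := by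
      have point : ∀ k l, T k l • (X k * Y l) = (T k l * ⟪w k, w l⟫) • outer e₀ e₀ := by
        intro k l
        rw [hX, hY]
        simp only []
        rw [outer_mul_outer, smul_smul]
      have hsum : (∑ k, ∑ l, T k l * ⟪w k, w l⟫) • outer e₀ e₀
          = ∑ k, ∑ l, (T k l * ⟪w k, w l⟫) • outer e₀ e₀ := by
        rw [Finset.sum_smul (f := fun k => ∑ l, T k l * ⟪w k, w l⟫) (x := outer e₀ e₀)]
        exact Finset.sum_congr rfl fun k _ =>
          Finset.sum_smul (f := fun l => T k l * ⟪w k, w l⟫) (x := outer e₀ e₀)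
      rw [hsum]
      exact Finset.sum_congr rfl fun k _ => Finset.sum_congr rfl fun l _ => point k l
    have hnorm : ‖∑ k, ∑ l, T k l • (X k * Y l)‖ =
        |∑ i : Fin n, ∑ j : Fin n, A i j * ⟪u i, v j⟫| := by
      rw [hop, hscal,
        norm_smul (∑ i : Fin n, ∑ j : Fin n, A i j * ⟪u i, v j⟫) (outer e₀ e₀),
        Real.norm_eq_abs, outer_norm, he₀n, mul_one, mul_one]
    exact ⟨m + 1, X, Y, hXn, hYn, hnorm.symm⟩

/-- Any contraction value of the bilinear form of `A` is bounded by `matCb T` for any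
representing matrix `T`. -/
lemma opbound {n : ℕ} (A : Matrix (Fin n) (Fin n) ℝ)
    (T : Matrix (Fin n ⊕ Fin n) (Fin n ⊕ Fin n) ℝ)
    (hT : ∀ z : Fin n ⊕ Fin n → ℝ,
          ∑ k, ∑ l, T k l * z k * z l =
          ∑ i : Fin n, ∑ j : Fin n, A i j * z (Sum.inl i) * z (Sum.inr j))
    (d : ℕ) (B C : Fin n → Mat d)
    (hB : ∀ i, ‖B i‖ ≤ 1) (hC : ∀ j, ‖C j‖ ≤ 1) :
    ‖∑ i : Fin n, ∑ j : Fin n, A i j • (B i * C j)‖ ≤ matCb T := by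
  set L : Mat d := ∑ i : Fin n, ∑ j : Fin n, A i j • (B i * C j) with hL
  refine ContinuousLinearMap.opNorm_le_bound L (matCb_nonneg T) fun x => ?_
  by_cases hLx : L x = 0
  · rw [hLx, norm_zero]
    exact mul_nonneg (matCb_nonneg T) (norm_nonneg x)
  have ha : (0:ℝ) < ‖L x‖ := norm_pos_iff.mpr hLx
  have hx : x ≠ 0 := by
    intro h; exact hLx (by rw [h, map_zero])
  have hb : (0:ℝ) < ‖x‖ := norm_pos_iff.mpr hx
  set a := ‖L x‖
  set b := ‖x‖
  set u : Fin n → EuclideanSpace ℝ (Fin d) :=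
    fun i => a⁻¹ • (ContinuousLinearMap.adjoint (B i)) (L x) with hu
  set v : Fin n → EuclideanSpace ℝ (Fin d) := fun j => b⁻¹ • (C j x) with hv
  have hun : ∀ i, ‖u i‖ ≤ 1 := by
    intro i
    rw [hu]
    simp only [norm_smul, norm_inv, Real.norm_eq_abs, abs_of_pos ha]
    have h1 : ‖(ContinuousLinearMap.adjoint (B i)) (L x)‖ ≤ 1 * a := by
      calc ‖(ContinuousLinearMap.adjoint (B i)) (L x)‖
          ≤ ‖ContinuousLinearMap.adjoint (B i)‖ * a :=
            ContinuousLinearMap.le_opNorm _ _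
        _ ≤ 1 * a := by
            refine mul_le_mul_of_nonneg_right ?_ ha.le
            rw [LinearIsometryEquiv.norm_map ContinuousLinearMap.adjoint (B i)]
            exact hB i
    calc a⁻¹ * ‖(ContinuousLinearMap.adjoint (B i)) (L x)‖ ≤ a⁻¹ * (1 * a) := by
          exact mul_le_mul_of_nonneg_left h1 (inv_nonneg.mpr ha.le)
      _ = 1 := by field_simp
  have hvn : ∀ j, ‖v j‖ ≤ 1 := by
    intro j
    rw [hv]
    simp only [norm_smul, norm_inv, Real.norm_eq_abs, abs_of_pos hb]
    have h1 : ‖C j x‖ ≤ 1 * b :=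
      (ContinuousLinearMap.le_opNorm _ _).trans
        (mul_le_mul_of_nonneg_right (hC j) hb.le)
    calc b⁻¹ * ‖C j x‖ ≤ b⁻¹ * (1 * b) := mul_le_mul_of_nonneg_left h1 (inv_nonneg.mpr hb.le)
      _ = 1 := by field_simp
  have hinner : ∑ i : Fin n, ∑ j : Fin n, A i j * ⟪u i, v j⟫ = a⁻¹ * b⁻¹ * (a * a) := by
    have hLxLx : ⟪L x, L x⟫ = a * a := by
      rw [real_inner_self_eq_norm_sq]; ring
    have expand : ∀ i j, ⟪u i, v j⟫ = a⁻¹ * b⁻¹ * ⟪L x, (B i) ((C j) x)⟫ := by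
      intro i j
      rw [hu, hv]
      simp only []
      rw [real_inner_smul_left, real_inner_smul_right,
        ContinuousLinearMap.adjoint_inner_left]
      ring
    calc ∑ i : Fin n, ∑ j : Fin n, A i j * ⟪u i, v j⟫
        = a⁻¹ * b⁻¹ * ∑ i : Fin n, ∑ j : Fin n, A i j * ⟪L x, (B i) ((C j) x)⟫ := by
          rw [Finset.mul_sum]
          refine Finset.sum_congr rfl fun i _ => ?_
          rw [Finset.mul_sum]
          refine Finset.sum_congr rfl fun j _ => ?_
          rw [expand i j]; ring
      _ = a⁻¹ * b⁻¹ * ⟪L x, L x⟫ := by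
          congr 1
          have : (L : Mat d) x = ∑ i : Fin n, ∑ j : Fin n, A i j • (B i) ((C j) x) := by
            rw [hL]
            rw [ContinuousLinearMap.sum_apply]
            refine Finset.sum_congr rfl fun i _ => ?_
            rw [ContinuousLinearMap.sum_apply]
            refine Finset.sum_congr rfl fun j _ => ?_
            rfl
          have h2 : (⟪L x, L x⟫:ℝ) = ∑ i : Fin n, ∑ j : Fin n,
              A i j * ⟪L x, (B i) ((C j) x)⟫ := by
            nth_rewrite 2 [this]
            rw [inner_sum]
            refine Finset.sum_congr rfl fun i _ => ?_
            rw [inner_sum]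
            refine Finset.sum_congr rfl fun j _ => ?_
            rw [real_inner_smul_right]
          rw [h2]
      _ = a⁻¹ * b⁻¹ * (a * a) := by rw [hLxLx]
  have hkey := le_matCb T (key A T hT d u v hun hvn)
  rw [hinner] at hkey
  have habs : |a⁻¹ * b⁻¹ * (a * a)| = a * b⁻¹ := by
    rw [abs_of_pos (by positivity)]
    field_simp
  rw [habs] at hkey
  calc a = a * b⁻¹ * b := by
        rw [mul_assoc, inv_mul_cancel₀ hb.ne', mul_one]
    _ ≤ matCb T * b := mul_le_mul_of_nonneg_right hkey hb.le

end CbAux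

open CbAux

/-- For the bilinear form `p(x,y) = xᵀ A y`, viewed as a quadratic form in `2n`
variables, the completely bounded norm of `p` (the infimum of `‖T‖_cb` over `2n × 2n`
matrices `T` representing `p`) equals the completely bounded norm of `A`. -/
theorem cb_norm_bilinear_form (n : ℕ) (A : Matrix (Fin n) (Fin n) ℝ) :
    sInf {c : ℝ | ∃ T : Matrix (Fin n ⊕ Fin n) (Fin n ⊕ Fin n) ℝ,
        (∀ z : Fin n ⊕ Fin n → ℝ,
          ∑ k, ∑ l, T k l * z k * z l =
          ∑ i : Fin n, ∑ j : Fin n, A i j * z (Sum.inl i) * z (Sum.inr j)) ∧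
        c = matCb T} =
    matCb A := by
  classical
  set T₀ : Matrix (Fin n ⊕ Fin n) (Fin n ⊕ Fin n) ℝ := Matrix.fromBlocks 0 A 0 0 with hT₀
  have hrep : ∀ z : Fin n ⊕ Fin n → ℝ,
      ∑ k, ∑ l, T₀ k l * z k * z l =
      ∑ i : Fin n, ∑ j : Fin n, A i j * z (Sum.inl i) * z (Sum.inr j) := by
    intro z
    rw [Fintype.sum_sum_type]
    simp only [hT₀, Fintype.sum_sum_type, Matrix.fromBlocks_apply₁₁,
      Matrix.fromBlocks_apply₁₂, Matrix.fromBlocks_apply₂₁, Matrix.fromBlocks_apply₂₂,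
      Matrix.zero_apply, zero_mul, Finset.sum_const_zero, add_zero, zero_add]
  -- matCb T₀ = matCb A
  have h1 : matCb T₀ ≤ matCb A := by
    rw [matCb_eq T₀]
    refine csSup_le ⟨0, zero_mem_cbSet T₀⟩ ?_
    rintro c ⟨d, X, Y, hX, hY, rfl⟩
    have hsum : ∑ k, ∑ l, T₀ k l • (X k * Y l) =
        ∑ i : Fin n, ∑ j : Fin n, A i j • (X (Sum.inl i) * Y (Sum.inr j)) := by
      rw [Fintype.sum_sum_type]
      simp only [hT₀, Fintype.sum_sum_type, Matrix.fromBlocks_apply₁₁,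
        Matrix.fromBlocks_apply₁₂, Matrix.fromBlocks_apply₂₁, Matrix.fromBlocks_apply₂₂,
        Matrix.zero_apply, show ∀ (g : Mat d), (0:ℝ) • g = 0 from fun g => zero_smul ℝ g,
        Finset.sum_const_zero, add_zero, zero_add]
    refine le_matCb A ⟨d, fun i => X (Sum.inl i), fun j => Y (Sum.inr j),
      fun i => hX _, fun j => hY _, ?_⟩
    rw [hsum]
  have h2 : matCb A ≤ matCb T₀ := by
    rw [matCb_eq A]
    refine csSup_le ⟨0, zero_mem_cbSet A⟩ ?_
    rintro c ⟨d, B, C, hB, hC, rfl⟩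
    exact opbound A T₀ hrep d B C hB hC
  have hT₀A : matCb T₀ = matCb A := le_antisymm h1 h2
  apply le_antisymm
  · exact csInf_le
      ⟨0, by rintro c ⟨T, _, rfl⟩; exact matCb_nonneg T⟩
      ⟨T₀, hrep, hT₀A.symm⟩
  · refine le_csInf ⟨matCb A, T₀, hrep, hT₀A.symm⟩ ?_
    rintro c ⟨T, hT, rfl⟩
    rw [matCb_eq A]
    refine csSup_le ⟨0, zero_mem_cbSet A⟩ ?_
    rintro c' ⟨d, B, C, hB, hC, rfl⟩
    exact opbound A T hT d B C hB hC
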